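/- For every shape parameter λ > 0, the Mills ratio of the skew normal distribution satisfies x · (1 - F_λ(x)) / f_λ(x) → 1 as x → ∞. -/

import Mathlib

open Real MeasureTheory Filter Topology Set

/-- Standard normal density. -/
noncomputable def stdPhi (x : ℝ) : ℝ := (Real.sqrt (2 * Real.pi))⁻¹ * Real.exp (-(x ^ 2) / 2)

/-- Standard normal cdf. -/
noncomputable def stdCdf (x : ℝ) : ℝ := ∫ t in Set.Iic x, stdPhi t

/-- Skew normal density with shape parameter l. -/
noncomputable def snPdf (l x : ℝ) : ℝ := 2 * stdPhi x * stdCdf (l * x)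

/-- Skew normal cdf with shape parameter l. -/
noncomputable def snCdf (l x : ℝ) : ℝ := ∫ t in Set.Iic x, snPdf l t

/-- Gumbel extreme value distribution function. -/
noncomputable def gumbel (x : ℝ) : ℝ := Real.exp (-Real.exp (-x))

/-- Standard normal tail. -/
noncomputable def stdTail (x : ℝ) : ℝ := ∫ t in Set.Ioi x, stdPhi t



lemma stdPhi_pos (x : ℝ) : 0 < stdPhi x := by
  unfold stdPhi
  positivity

lemma stdPhi_eq (x : ℝ) : stdPhi x = (Real.sqrt (2 * Real.pi))⁻¹ * Real.exp (-(1/2 : ℝ) * x ^ 2) := by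
  unfold stdPhi; ring_nf

lemma continuous_stdPhi : Continuous stdPhi := by
  unfold stdPhi
  continuity

lemma integrable_stdPhi : Integrable stdPhi := by
  have h : Integrable fun x : ℝ => Real.exp (-(1/2 : ℝ) * x ^ 2) :=
    integrable_exp_neg_mul_sq (by norm_num)
  have := h.const_mul (Real.sqrt (2 * Real.pi))⁻¹
  refine this.congr (Eventually.of_forall fun x => ?_)
  rw [stdPhi_eq]

lemma integral_stdPhi : ∫ x, stdPhi x = 1 := by
  have : ∫ x, stdPhi x = (Real.sqrt (2 * Real.pi))⁻¹ * ∫ x : ℝ, Real.exp (-(1/2 : ℝ) * x ^ 2) := by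
    rw [← integral_const_mul]
    congr 1; ext x; rw [stdPhi_eq]
  rw [this, integral_gaussian]
  have h2 : (π : ℝ) / (1/2) = 2 * π := by ring
  rw [h2, inv_mul_cancel₀]
  positivity



lemma stdCdf_add_tail (x : ℝ) : stdCdf x + stdTail x = 1 := by
  rw [stdCdf, stdTail, intervalIntegral.integral_Iic_add_Ioi integrable_stdPhi.integrableOn
    integrable_stdPhi.integrableOn, integral_stdPhi]

lemma stdCdf_nonneg (x : ℝ) : 0 ≤ stdCdf x :=
  setIntegral_nonneg measurableSet_Iic fun t _ => (stdPhi_pos t).le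

lemma stdTail_nonneg (x : ℝ) : 0 ≤ stdTail x :=
  setIntegral_nonneg measurableSet_Ioi fun t _ => (stdPhi_pos t).le

lemma stdCdf_le_one (x : ℝ) : stdCdf x ≤ 1 := by
  have := stdCdf_add_tail x; have := stdTail_nonneg x; linarith

lemma stdCdf_mono : Monotone stdCdf := by
  intro x y hxy
  exact setIntegral_mono_set integrable_stdPhi.integrableOn
    (Eventually.of_forall fun t => (stdPhi_pos t).le)
    (HasSubset.Subset.eventuallyLE (Iic_subset_Iic.mpr hxy))

lemma stdCdf_pos (x : ℝ) : 0 < stdCdf x := by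
  rw [stdCdf, setIntegral_pos_iff_support_of_nonneg_ae
    (Eventually.of_forall fun t => (stdPhi_pos t).le) integrable_stdPhi.integrableOn]
  have : Function.support stdPhi = Set.univ := by
    ext t; simp [Function.support, (stdPhi_pos t).ne']
  rw [this, Set.univ_inter]
  simp [Real.volume_Iic]

lemma tendsto_stdCdf_atTop : Tendsto stdCdf atTop (𝓝 1) := by
  have := (MeasureTheory.aecover_Iic (μ := (volume : Measure ℝ))
    (l := atTop) (b := fun x : ℝ => x) tendsto_id).integral_tendsto_of_countably_generated
    integrable_stdPhi
  rwa [integral_stdPhi] at this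



lemma stdPhi_neg (x : ℝ) : stdPhi (-x) = stdPhi x := by unfold stdPhi; ring_nf

lemma stdCdf_neg (x : ℝ) : stdCdf (-x) = stdTail x := by
  rw [stdCdf, stdTail]
  have : ∀ t : ℝ, stdPhi t = stdPhi (-t) := fun t => (stdPhi_neg t).symm
  calc ∫ t in Iic (-x), stdPhi t = ∫ t in Iic (-x), stdPhi (-t) := by
        exact setIntegral_congr_fun measurableSet_Iic fun t _ => this t
    _ = ∫ t in Ioi x, stdPhi t := by rw [integral_comp_neg_Iic]; norm_num

lemma measurable_stdCdf : Measurable stdCdf := stdCdf_mono.measurable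

lemma snPdf_nonneg (l x : ℝ) : 0 ≤ snPdf l x := by
  unfold snPdf
  have := stdPhi_pos x; have := stdCdf_nonneg (l * x); positivity

lemma snPdf_le (l x : ℝ) : snPdf l x ≤ 2 * stdPhi x := by
  unfold snPdf
  have h1 := stdPhi_pos x
  nlinarith [stdCdf_le_one (l * x)]

lemma aesm_snPdf (l : ℝ) : AEStronglyMeasurable (snPdf l) volume := by
  refine Measurable.aestronglyMeasurable ?_
  unfold snPdf
  exact ((continuous_stdPhi.measurable.const_mul 2).mul
    (measurable_stdCdf.comp (measurable_id.const_mul l)))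

lemma integrable_snPdf (l : ℝ) : Integrable (snPdf l) := by
  refine Integrable.mono' (integrable_stdPhi.const_mul 2) (aesm_snPdf l)
    (Eventually.of_forall fun x => ?_)
  rw [Real.norm_eq_abs, abs_of_nonneg (snPdf_nonneg l x)]
  exact snPdf_le l x

lemma integral_snPdf (l : ℝ) : ∫ x, snPdf l x = 1 := by
  have hneg : ∫ x, snPdf l (-x) = ∫ x, snPdf l x := integral_neg_eq_self _ _
  have hkey : ∀ x : ℝ, snPdf l (-x) = 2 * stdPhi x - snPdf l x := by
    intro x
    unfold snPdf
    rw [stdPhi_neg, mul_neg, stdCdf_neg]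
    have := stdCdf_add_tail (l * x)
    nlinarith [stdPhi_pos x]
  have h2 : ∫ x, snPdf l (-x) = (∫ x, (2 : ℝ) * stdPhi x) - ∫ x, snPdf l x := by
    rw [← integral_sub (integrable_stdPhi.const_mul 2) (integrable_snPdf l)]
    exact integral_congr_ae (Eventually.of_forall fun x => hkey x)
  rw [h2, integral_const_mul, integral_stdPhi] at hneg
  linarith

lemma tail_snCdf (l x : ℝ) : 1 - snCdf l x = ∫ t in Ioi x, snPdf l t := by
  have := intervalIntegral.integral_Iic_add_Ioi (b := x) (f := snPdf l) (μ := volume)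
    (integrable_snPdf l).integrableOn (integrable_snPdf l).integrableOn
  rw [integral_snPdf] at this
  rw [snCdf]; linarith



lemma hasDerivAt_stdPhi (x : ℝ) : HasDerivAt stdPhi (-x * stdPhi x) x := by
  have h : HasDerivAt (fun t : ℝ => -(t ^ 2) / 2) (-x) x := by
    have := ((hasDerivAt_pow 2 x).neg).div_const 2
    exact this.congr_deriv (by norm_num; ring)
  have := (h.exp).const_mul (Real.sqrt (2 * Real.pi))⁻¹
  exact this.congr_deriv (by unfold stdPhi; ring)

lemma tendsto_stdPhi_atTop : Tendsto stdPhi atTop (𝓝 0) := by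
  have h : Tendsto (fun x : ℝ => -(x ^ 2) / 2) atTop atBot := by
    apply Tendsto.atBot_div_const (by norm_num)
    exact tendsto_neg_atBot_iff.mpr (tendsto_pow_atTop (by norm_num))
  have := Real.tendsto_exp_atBot.comp h
  have h2 := this.const_mul (Real.sqrt (2 * Real.pi))⁻¹
  rw [mul_zero] at h2
  exact h2.congr fun x => by simp [stdPhi, Function.comp]

lemma integrable_mul_stdPhi (x : ℝ) : IntegrableOn (fun t => t * stdPhi t) (Ioi x) := by
  have h : Integrable fun t : ℝ => t * Real.exp (-(1/2 : ℝ) * t ^ 2) :=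
    integrable_mul_exp_neg_mul_sq (by norm_num)
  have := (h.const_mul (Real.sqrt (2 * Real.pi))⁻¹).integrableOn (s := Ioi x)
  refine this.congr_fun (fun t _ => ?_) measurableSet_Ioi
  rw [stdPhi_eq]; ring

lemma integral_mul_stdPhi (x : ℝ) : ∫ t in Ioi x, t * stdPhi t = stdPhi x := by
  have := integral_Ioi_of_hasDerivAt_of_tendsto' (a := x)
    (f := fun t => -stdPhi t) (f' := fun t => t * stdPhi t)
    (fun t _ => (hasDerivAt_stdPhi t).neg.congr_deriv (by ring))
    (integrable_mul_stdPhi x) (by simpa using tendsto_stdPhi_atTop.neg)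
  simpa using this

lemma integrable_one_add_inv_sq_stdPhi {x : ℝ} (hx : 0 < x) :
    IntegrableOn (fun t => (1 + t⁻¹ ^ 2) * stdPhi t) (Ioi x) := by
  refine Integrable.mono' ((integrable_stdPhi.const_mul (1 + x⁻¹ ^ 2)).integrableOn)
    ?_ (ae_restrict_of_forall_mem measurableSet_Ioi fun t ht => ?_)
  · refine Measurable.aestronglyMeasurable ?_
    exact ((measurable_const.add ((measurable_id.inv).pow_const 2)).mul
      continuous_stdPhi.measurable)
  · have htx : x < t := ht
    have ht0 : 0 < t := hx.trans htx
    have h1 : t⁻¹ ^ 2 ≤ x⁻¹ ^ 2 := by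
      have : t⁻¹ ≤ x⁻¹ := inv_anti₀ hx htx.le
      have h0 : (0:ℝ) ≤ t⁻¹ := by positivity
      nlinarith
    have hp := stdPhi_pos t
    rw [Real.norm_eq_abs, abs_of_nonneg (by positivity)]
    nlinarith

lemma integral_one_add_inv_sq_stdPhi {x : ℝ} (hx : 0 < x) :
    ∫ t in Ioi x, (1 + t⁻¹ ^ 2) * stdPhi t = stdPhi x / x := by
  have deriv : ∀ t ∈ Ici x, HasDerivAt (fun u => -(stdPhi u / u)) ((1 + t⁻¹ ^ 2) * stdPhi t) t := by
    intro t ht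
    have ht0 : 0 < t := lt_of_lt_of_le hx ht
    have h := ((hasDerivAt_stdPhi t).div (hasDerivAt_id t) ht0.ne').neg
    exact h.congr_deriv (by
      simp only [id]
      field_simp
      ring)
  have hlim : Tendsto (fun u => -(stdPhi u / u)) atTop (𝓝 0) := by
    have := (tendsto_stdPhi_atTop.mul tendsto_inv_atTop_zero).neg
    simpa [div_eq_mul_inv] using this
  have := integral_Ioi_of_hasDerivAt_of_tendsto' deriv
    (integrable_one_add_inv_sq_stdPhi hx) hlim
  simpa using this

lemma stdTail_le {x : ℝ} (hx : 0 < x) : stdTail x ≤ stdPhi x / x := by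
  rw [stdTail, ← integral_mul_stdPhi x, ← integral_div]
  refine setIntegral_mono_on integrable_stdPhi.integrableOn
    ((integrable_mul_stdPhi x).div_const x) measurableSet_Ioi fun t ht => ?_
  have htx : x < t := ht
  have hp := stdPhi_pos t
  rw [le_div_iff₀ hx]
  nlinarith

lemma le_stdTail {x : ℝ} (hx : 0 < x) : (1 + x⁻¹ ^ 2)⁻¹ * (stdPhi x / x) ≤ stdTail x := by
  have key : (1 + x⁻¹ ^ 2)⁻¹ * (stdPhi x / x)
      = ∫ t in Ioi x, (1 + x⁻¹ ^ 2)⁻¹ * ((1 + t⁻¹ ^ 2) * stdPhi t) := by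
    rw [integral_const_mul, integral_one_add_inv_sq_stdPhi hx]
  rw [key, stdTail]
  refine setIntegral_mono_on
    (((integrable_one_add_inv_sq_stdPhi hx).const_mul _))
    integrable_stdPhi.integrableOn measurableSet_Ioi fun t ht => ?_
  have htx : x < t := ht
  have ht0 : 0 < t := hx.trans htx
  have h1 : t⁻¹ ^ 2 ≤ x⁻¹ ^ 2 := by
    have : t⁻¹ ≤ x⁻¹ := inv_anti₀ hx htx.le
    have h0 : (0:ℝ) ≤ t⁻¹ := by positivity
    nlinarith
  have hp := stdPhi_pos t
  have hx2 : (0:ℝ) < 1 + x⁻¹ ^ 2 := by positivity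
  rw [inv_mul_le_iff₀ hx2]
  nlinarith



lemma snTail_le (l : ℝ) (x : ℝ) : (1 - snCdf l x) ≤ 2 * stdTail x := by
  rw [tail_snCdf, stdTail, ← integral_const_mul]
  exact setIntegral_mono_on (integrable_snPdf l).integrableOn
    (integrable_stdPhi.const_mul 2).integrableOn measurableSet_Ioi
    fun t _ => snPdf_le l t

lemma le_snTail {l : ℝ} (hl : 0 < l) (x : ℝ) :
    2 * stdCdf (l * x) * stdTail x ≤ (1 - snCdf l x) := by
  rw [tail_snCdf, stdTail, ← integral_const_mul]
  refine setIntegral_mono_on ((integrable_stdPhi.const_mul _).integrableOn)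
    (integrable_snPdf l).integrableOn measurableSet_Ioi fun t ht => ?_
  have htx : x < t := ht
  have hc : stdCdf (l * x) ≤ stdCdf (l * t) :=
    stdCdf_mono (by nlinarith)
  have hp := stdPhi_pos t
  unfold snPdf
  nlinarith

theorem skew_normal_mills_ratio_pos (l : ℝ) (hl : 0 < l) :
    Tendsto (fun x : ℝ => x * (1 - snCdf l x) / snPdf l x) atTop (𝓝 1) := by
  have hg : Tendsto (fun x : ℝ => (1 + x⁻¹ ^ 2)⁻¹) atTop (𝓝 1) := by
    have : Tendsto (fun x : ℝ => 1 + x⁻¹ ^ 2) atTop (𝓝 (1 + 0 ^ 2)) :=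
      tendsto_const_nhds.add (tendsto_inv_atTop_zero.pow 2)
    have := this.inv₀ (by norm_num)
    simpa using this
  have hh : Tendsto (fun x : ℝ => (stdCdf (l * x))⁻¹) atTop (𝓝 1) := by
    have hlx : Tendsto (fun x : ℝ => l * x) atTop atTop :=
      Tendsto.const_mul_atTop hl tendsto_id
    have := (tendsto_stdCdf_atTop.comp hlx).inv₀ one_ne_zero
    simpa using this
  refine tendsto_of_tendsto_of_tendsto_of_le_of_le' hg hh ?_ ?_
  · filter_upwards [eventually_gt_atTop (0 : ℝ)] with x hx
    set c := stdCdf (l * x) with hcdef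
    set p := stdPhi x with hpdef
    have hc : 0 < c := stdCdf_pos _
    have hp : 0 < p := stdPhi_pos _
    have hT := le_stdTail hx
    have hS := le_snTail hl x
    have hd : 0 < snPdf l x := by
      rw [snPdf]; positivity
    rw [le_div_iff₀ hd]
    have key : (1 + x⁻¹ ^ 2)⁻¹ * snPdf l x
        = x * (2 * c * ((1 + x⁻¹ ^ 2)⁻¹ * (p / x))) := by
      rw [snPdf]
      field_simp
      rw [hcdef, hpdef]; ring
    rw [key]
    have h1 : 2 * c * ((1 + x⁻¹ ^ 2)⁻¹ * (p / x)) ≤ 2 * c * stdTail x := by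
      have : (0:ℝ) ≤ 2 * c := by positivity
      exact mul_le_mul_of_nonneg_left hT this
    calc x * (2 * c * ((1 + x⁻¹ ^ 2)⁻¹ * (p / x)))
        ≤ x * (2 * c * stdTail x) := by
          exact mul_le_mul_of_nonneg_left h1 hx.le
      _ ≤ x * (1 - snCdf l x) := mul_le_mul_of_nonneg_left hS hx.le
  · filter_upwards [eventually_gt_atTop (0 : ℝ)] with x hx
    set c := stdCdf (l * x) with hcdef
    set p := stdPhi x with hpdef
    have hc : 0 < c := stdCdf_pos _
    have hp : 0 < p := stdPhi_pos _
    have hT := stdTail_le hx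
    have hS := snTail_le l x
    have hd : 0 < snPdf l x := by rw [snPdf]; positivity
    rw [div_le_iff₀ hd]
    have key : c⁻¹ * snPdf l x = x * (2 * (p / x)) := by
      rw [snPdf]
      field_simp
      rw [hcdef, hpdef]; ring
    rw [key]
    calc x * (1 - snCdf l x) ≤ x * (2 * stdTail x) :=
          mul_le_mul_of_nonneg_left hS hx.le
      _ ≤ x * (2 * (p / x)) := by
          refine mul_le_mul_of_nonneg_left ?_ hx.le
          linarith
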